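/- arXiv:2309.02015 — 3 statements merged into one kernel-verified Lean document; each statement's English description precedes it below -/
import Mathlib

section
/- For every real parameter a > 0 and every s ∈ ℂ with Re s > 3, all the series defining η_a(s) and θ_a(s) converge absolutely and η_a(s) = θ_a(s) + (2a)^{−s} + 4 a^s ζ(s−1), where ζ denotes the Riemann zeta function. -/
noncomputable section

/-- `μ_a(n,l) := n(n+2) + (a⁻² − 1)(n − 2l)²`. -/
def muBerger (a : ℝ) (n l : ℕ) : ℝ :=
  (n : ℝ) * ((n : ℝ) + 2) + ((a ^ 2)⁻¹ - 1) * ((n : ℝ) - 2 * (l : ℝ)) ^ 2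

/-- The multiplicity `m(n,l)`. -/
def multBerger (n l : ℕ) : ℕ :=
  if Even n ∧ 2 * l = n then n + 1 else 2 * n + 2

/-- The eta function of `curl` on the Berger 3-sphere with parameter `a`. -/
def etaBergerCurl (a : ℝ) (s : ℂ) : ℂ :=
  (∑' n : ℕ, (2 * ((n : ℂ) + 2) - 2) * (((((n : ℝ) + 2) / a) : ℝ) : ℂ) ^ (-s))
    + ((2 * a : ℝ) : ℂ) ^ (-s)
    + (∑' n : ℕ,
        (2 * ((n : ℂ) + 3) - 2) * ((((((n : ℝ) + 3) + 2 * (a ^ 2 - 1)) / a) : ℝ) : ℂ) ^ (-s))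
    + ∑' n : ℕ, ∑ l ∈ Finset.Icc 1 ((n + 2) / 2),
        (multBerger (n + 2) l : ℂ) *
          (((a + Real.sqrt (a ^ 2 + muBerger a (n + 2) l) : ℝ) : ℂ) ^ (-s)
            - ((Real.sqrt (a ^ 2 + muBerger a (n + 2) l) - a : ℝ) : ℂ) ^ (-s))

/-- `θ_a(s) := Σ_{n≥1} Σ_{l=0}^{⌊n/2⌋} m(n,l)[(√(a²+μ_a(n,l))+a)^{−s} − (√(a²+μ_a(n,l))−a)^{−s}]`. -/
def thetaBerger (a : ℝ) (s : ℂ) : ℂ :=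
  ∑' n : ℕ, ∑ l ∈ Finset.Icc 0 ((n + 1) / 2),
    (multBerger (n + 1) l : ℂ) *
      (((Real.sqrt (a ^ 2 + muBerger a (n + 1) l) + a : ℝ) : ℂ) ^ (-s)
        - ((Real.sqrt (a ^ 2 + muBerger a (n + 1) l) - a : ℝ) : ℂ) ^ (-s))

/-! ### Auxiliary definitions and lemmas -/

/-- A positive constant with `μ_a(n,l) ≥ cB a · n²`. -/
def cB (a : ℝ) : ℝ := min 1 (a ^ 2)⁻¹

/-- A positive constant with `√(a² + μ_a(n,l)) ≥ a + KB a · n`. -/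
def KB (a : ℝ) : ℝ := cB a / (2 * a + Real.sqrt (cB a) + 1)

/-- The generic summand of `θ`. -/
def Fterm (a : ℝ) (s : ℂ) (n l : ℕ) : ℂ :=
  (multBerger n l : ℂ) *
    (((Real.sqrt (a ^ 2 + muBerger a n l) + a : ℝ) : ℂ) ^ (-s)
      - ((Real.sqrt (a ^ 2 + muBerger a n l) - a : ℝ) : ℂ) ^ (-s))

lemma cB_pos {a : ℝ} (ha : 0 < a) : 0 < cB a :=
  lt_min one_pos (by positivity)

lemma KB_pos {a : ℝ} (ha : 0 < a) : 0 < KB a :=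
  div_pos (cB_pos ha) (by positivity)

lemma mu_lower {a : ℝ} {n l : ℕ} (hl : 2 * l ≤ n) :
    cB a * (n : ℝ) ^ 2 ≤ muBerger a n l := by
  have hln : (0 : ℝ) ≤ (n : ℝ) - 2 * l := by
    have : ((2 * l : ℕ) : ℝ) ≤ (n : ℕ) := Nat.cast_le.mpr hl
    push_cast at this; linarith
  have hsq : ((n : ℝ) - 2 * l) ^ 2 ≤ (n : ℝ) ^ 2 := by
    have h0 : (0:ℝ) ≤ (l:ℝ) := Nat.cast_nonneg l
    nlinarith
  have hn0 : (0 : ℝ) ≤ (n : ℝ) := Nat.cast_nonneg n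
  unfold muBerger cB
  rcases le_total ((a ^ 2)⁻¹) 1 with h | h
  · rw [min_eq_right h]
    nlinarith [mul_nonneg (by linarith : (0:ℝ) ≤ 1 - (a ^ 2)⁻¹)
      (by linarith : (0:ℝ) ≤ (n : ℝ) ^ 2 - ((n : ℝ) - 2 * l) ^ 2)]
  · rw [min_eq_left h]
    nlinarith [mul_nonneg (by linarith : (0:ℝ) ≤ (a ^ 2)⁻¹ - 1) (sq_nonneg ((n : ℝ) - 2 * l))]

lemma sqrt_lower {a : ℝ} (ha : 0 < a) {n l : ℕ} (hn : 1 ≤ n) (hl : 2 * l ≤ n) :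
    a + KB a * n ≤ Real.sqrt (a ^ 2 + muBerger a n l) := by
  have hc := cB_pos ha
  have hK := KB_pos ha
  have hmu := mu_lower (a := a) hl
  have hsc : Real.sqrt (cB a) ^ 2 = cB a := Real.sq_sqrt hc.le
  have hscn : 0 ≤ Real.sqrt (cB a) := Real.sqrt_nonneg _
  have hden : 0 < 2 * a + Real.sqrt (cB a) + 1 := by positivity
  have hKeq : KB a * (2 * a + Real.sqrt (cB a) + 1) = cB a := by
    unfold KB; field_simp
  have hKle : KB a ≤ Real.sqrt (cB a) := by nlinarith
  have hn1 : (1 : ℝ) ≤ (n : ℝ) := by exact_mod_cast hn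
  have hmu0 : 0 ≤ muBerger a n l := le_trans (by positivity) hmu
  rw [← Real.sqrt_sq (by positivity : (0:ℝ) ≤ a + KB a * n)]
  apply Real.sqrt_le_sqrt
  have hnn : (n : ℝ) ≤ (n : ℝ) ^ 2 := by nlinarith
  nlinarith [mul_nonneg (mul_nonneg hK.le ha.le) (by linarith : (0:ℝ) ≤ (n:ℝ)^2 - (n:ℝ)),
    mul_nonneg hK.le (sq_nonneg (n:ℝ))]

lemma norm_cpow_neg_real {x : ℝ} (hx : 0 < x) (s : ℂ) :
    ‖((x : ℝ) : ℂ) ^ (-s)‖ = x ^ (-s.re) := by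
  rw [Complex.norm_cpow_eq_rpow_re_of_pos hx, Complex.neg_re]

lemma summable_master {σ : ℝ} (hσ : 3 < σ) {f : ℕ → ℝ} {M : ℝ}
    (h0 : ∀ n, 0 ≤ f n)
    (hb : ∀ n : ℕ, f n ≤ M * (((n : ℝ) + 1) ^ 2 * ((n : ℝ) + 1) ^ (-σ))) :
    Summable f := by
  have h1 : Summable (fun n : ℕ => ((n : ℝ)) ^ ((2 : ℝ) - σ)) :=
    Real.summable_nat_rpow.mpr (by linarith)
  have h2 : Summable (fun n : ℕ => (((n + 1 : ℕ)) : ℝ) ^ ((2 : ℝ) - σ)) :=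
    (summable_nat_add_iff 1).mpr h1
  have h3 : Summable (fun n : ℕ => M * (((n : ℝ) + 1) ^ 2 * ((n : ℝ) + 1) ^ (-σ))) := by
    apply Summable.congr (h2.mul_left M)
    intro n
    have hpos : (0 : ℝ) < (n : ℝ) + 1 := by positivity
    push_cast
    rw [show (2 : ℝ) - σ = (2 : ℝ) + (-σ) by ring, Real.rpow_add hpos,
      show ((n:ℝ)+1) ^ (2:ℝ) = ((n:ℝ)+1) ^ (2:ℕ) from Real.rpow_natCast _ 2]
  exact Summable.of_nonneg_of_le h0 hb h3

lemma multBerger_le (n l : ℕ) : (multBerger n l : ℝ) ≤ 2 * (n : ℝ) + 2 := by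
  unfold multBerger
  split_ifs <;> push_cast <;> linarith [Nat.cast_nonneg (α := ℝ) n]

lemma Fterm_norm_le {a : ℝ} (ha : 0 < a) {s : ℂ} (hs : 0 ≤ s.re) {n l : ℕ}
    (hn : 1 ≤ n) (hl : 2 * l ≤ n) :
    ‖Fterm a s n l‖ ≤ (2 * (n : ℝ) + 2) * (2 * ((KB a) ^ (-s.re) * ((n : ℝ)) ^ (-s.re))) := by
  have hK := KB_pos ha
  have hn1 : (1 : ℝ) ≤ (n : ℝ) := by exact_mod_cast hn
  have hR := sqrt_lower ha hn hl
  set R := Real.sqrt (a ^ 2 + muBerger a n l) with hRdef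
  have hKn : 0 < KB a * n := by positivity
  have hy : 0 < R - a := by nlinarith
  have hx : 0 < R + a := by nlinarith
  have hKnn : (KB a * n) ^ (-s.re) = (KB a) ^ (-s.re) * ((n : ℝ)) ^ (-s.re) :=
    Real.mul_rpow hK.le (by positivity)
  have h1 : ‖((R + a : ℝ) : ℂ) ^ (-s)‖ ≤ (KB a * n) ^ (-s.re) := by
    rw [norm_cpow_neg_real hx]
    exact Real.rpow_le_rpow_of_nonpos hKn (by linarith) (by linarith)
  have h2 : ‖((R - a : ℝ) : ℂ) ^ (-s)‖ ≤ (KB a * n) ^ (-s.re) := by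
    rw [norm_cpow_neg_real hy]
    exact Real.rpow_le_rpow_of_nonpos hKn (by linarith) (by linarith)
  have hdiff : ‖((R + a : ℝ) : ℂ) ^ (-s) - ((R - a : ℝ) : ℂ) ^ (-s)‖
      ≤ 2 * ((KB a) ^ (-s.re) * ((n : ℝ)) ^ (-s.re)) := by
    rw [← hKnn]
    calc _ ≤ ‖((R + a : ℝ) : ℂ) ^ (-s)‖ + ‖((R - a : ℝ) : ℂ) ^ (-s)‖ := norm_sub_le _ _
    _ ≤ 2 * (KB a * n) ^ (-s.re) := by linarith
  have hm : ‖(multBerger n l : ℂ)‖ = (multBerger n l : ℝ) := by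
    exact_mod_cast Complex.norm_natCast (multBerger n l)
  rw [Fterm, norm_mul, hm]
  exact mul_le_mul (multBerger_le n l) hdiff (norm_nonneg _)
    (by linarith [Nat.cast_nonneg (α := ℝ) n])

lemma summable_Fterm_sum {a : ℝ} (ha : 0 < a) {s : ℂ} (hs : 3 < s.re) (k b : ℕ) (hk : 1 ≤ k) :
    Summable (fun n : ℕ => ∑ l ∈ Finset.Icc b ((n + k) / 2), ‖Fterm a s (n + k) l‖) := by
  have hK := KB_pos ha
  have hσ : (0 : ℝ) ≤ s.re := by linarith
  have hKr : (0:ℝ) ≤ (KB a) ^ (-s.re) := by positivity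
  apply summable_master hs (fun n => Finset.sum_nonneg fun l _ => norm_nonneg _)
    (M := ((k : ℝ) + 1) * (2 * k + 2) * 2 * (KB a) ^ (-s.re))
  intro n
  have hn1 : (0:ℝ) < (n : ℝ) + 1 := by positivity
  have hrn : (0:ℝ) ≤ ((n:ℝ)+1) ^ (-s.re) := by positivity
  set c : ℝ := (2 * (k : ℝ) + 2) * ((n : ℝ) + 1) * (2 * ((KB a) ^ (-s.re) * ((n : ℝ) + 1) ^ (-s.re))) with hc
  have hterm : ∀ l ∈ Finset.Icc b ((n + k) / 2), ‖Fterm a s (n + k) l‖ ≤ c := by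
    intro l hl
    rw [Finset.mem_Icc] at hl
    have h2l : 2 * l ≤ n + k := by omega
    have hnk : 1 ≤ n + k := by omega
    refine le_trans (Fterm_norm_le ha hσ hnk h2l) ?_
    have hcast : ((n + k : ℕ) : ℝ) = (n : ℝ) + k := by push_cast; ring
    rw [hcast]
    have hk1 : (1:ℝ) ≤ (k : ℝ) := by exact_mod_cast hk
    have hb1 : ((n : ℝ) + k) ^ (-s.re) ≤ ((n : ℝ) + 1) ^ (-s.re) :=
      Real.rpow_le_rpow_of_nonpos hn1 (by linarith) (by linarith)
    have hb2 : 2 * ((n : ℝ) + k) + 2 ≤ (2 * (k : ℝ) + 2) * ((n : ℝ) + 1) := by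
      nlinarith [Nat.cast_nonneg (α := ℝ) n]
    rw [hc]
    apply mul_le_mul hb2 _ (by positivity) (by positivity)
    have := mul_le_mul_of_nonneg_left hb1 hKr
    nlinarith
  calc (∑ l ∈ Finset.Icc b ((n + k) / 2), ‖Fterm a s (n + k) l‖)
      ≤ (Finset.Icc b ((n + k) / 2)).card • c := Finset.sum_le_card_nsmul _ _ c hterm
    _ = ((Finset.Icc b ((n + k) / 2)).card : ℝ) * c := nsmul_eq_mul _ _
    _ ≤ (((k:ℝ) + 1) * ((n : ℝ) + 1)) * c := by
        apply mul_le_mul_of_nonneg_right _ (by positivity)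
        have hcard : (Finset.Icc b ((n + k) / 2)).card ≤ (k + 1) * (n + 1) := by
          rw [Nat.card_Icc]
          have hkn : (k + 1) * (n + 1) = k * n + k + n + 1 := by ring
          omega
        calc ((Finset.Icc b ((n + k) / 2)).card : ℝ) ≤ (((k + 1) * (n + 1) : ℕ) : ℝ) := by
              exact_mod_cast hcard
          _ = ((k:ℝ) + 1) * ((n : ℝ) + 1) := by push_cast; ring
    _ = ((k : ℝ) + 1) * (2 * k + 2) * 2 * (KB a) ^ (-s.re) * (((n : ℝ) + 1) ^ 2 * ((n : ℝ) + 1) ^ (-s.re)) := by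
        rw [hc]; ring

lemma base_bound {a σ : ℝ} (ha : 0 < a) (hσ : 0 ≤ σ) {n : ℕ} {x : ℝ} (hx : (n : ℝ) + 1 ≤ x) :
    (x / a) ^ (-σ) ≤ (a⁻¹) ^ (-σ) * ((n : ℝ) + 1) ^ (-σ) := by
  have h0 : (0 : ℝ) < ((n : ℝ) + 1) / a := by positivity
  have h1 : (x / a) ^ (-σ) ≤ (((n : ℝ) + 1) / a) ^ (-σ) :=
    Real.rpow_le_rpow_of_nonpos h0 (by gcongr) (by linarith)
  calc (x / a) ^ (-σ) ≤ (((n : ℝ) + 1) / a) ^ (-σ) := h1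
    _ = (a⁻¹ * ((n : ℝ) + 1)) ^ (-σ) := by rw [div_eq_mul_inv, mul_comm]
    _ = (a⁻¹) ^ (-σ) * ((n : ℝ) + 1) ^ (-σ) := Real.mul_rpow (by positivity) (by positivity)

lemma coef_cpow_norm_summable {a : ℝ} (ha : 0 < a) {s : ℂ} (hs : 3 < s.re)
    {c : ℕ → ℂ} {x : ℕ → ℝ} {c' : ℝ}
    (hc : ∀ n, ‖c n‖ ≤ c' * ((n : ℝ) + 1)) (hc' : 0 ≤ c')
    (hx : ∀ n : ℕ, ((n : ℝ) + 1) ≤ x n) :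
    Summable (fun n : ℕ => ‖c n * (((x n / a : ℝ)) : ℂ) ^ (-s)‖) := by
  have hσ : (0 : ℝ) ≤ s.re := by linarith
  apply summable_master hs (fun n => norm_nonneg _) (M := c' * (a⁻¹) ^ (-s.re))
  intro n
  have hn1 : (0:ℝ) < (n : ℝ) + 1 := by positivity
  have hxp : (0:ℝ) < x n := lt_of_lt_of_le hn1 (hx n)
  rw [norm_mul, norm_cpow_neg_real (by positivity : (0:ℝ) < x n / a)]
  have hbb := base_bound ha hσ (hx n)
  have hrn : (0:ℝ) ≤ ((n:ℝ)+1) ^ (-s.re) := by positivity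
  have hra : (0:ℝ) ≤ (a⁻¹) ^ (-s.re) := by positivity
  calc ‖c n‖ * (x n / a) ^ (-s.re)
      ≤ (c' * ((n : ℝ) + 1)) * ((a⁻¹) ^ (-s.re) * ((n : ℝ) + 1) ^ (-s.re)) := by
        apply mul_le_mul (hc n) hbb (by positivity) (by positivity)
    _ ≤ c' * (a⁻¹) ^ (-s.re) * (((n : ℝ) + 1) ^ 2 * ((n : ℝ) + 1) ^ (-s.re)) := by
        nlinarith [mul_nonneg (mul_nonneg (mul_nonneg hc' hra) hrn)
          (mul_nonneg hn1.le (Nat.cast_nonneg (α := ℝ) n))]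

lemma Fterm_zero {a : ℝ} (ha : 0 < a) (s : ℂ) (n : ℕ) :
    Fterm a s (n + 1) 0 =
      (2 * (n : ℂ) + 4) * (((((n : ℝ) + 1 + 2 * a ^ 2) / a) : ℝ) : ℂ) ^ (-s)
        - (2 * (n : ℂ) + 4) * (((((n : ℝ) + 1) / a) : ℝ) : ℂ) ^ (-s) := by
  have hsqrt : Real.sqrt (a ^ 2 + muBerger a (n + 1) 0) = a + ((n : ℝ) + 1) / a := by
    have h : a ^ 2 + muBerger a (n + 1) 0 = (a + ((n : ℝ) + 1) / a) ^ 2 := by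
      unfold muBerger; push_cast; field_simp; ring
    rw [h, Real.sqrt_sq (by positivity)]
  have hm : (multBerger (n + 1) 0 : ℂ) = 2 * (n : ℂ) + 4 := by
    unfold multBerger
    rw [if_neg (by rintro ⟨-, h⟩; omega)]
    push_cast; ring
  rw [Fterm, hsqrt, hm,
    show a + ((n : ℝ) + 1) / a + a = ((n : ℝ) + 1 + 2 * a ^ 2) / a by field_simp; ring,
    show a + ((n : ℝ) + 1) / a - a = ((n : ℝ) + 1) / a by ring]
  ring

lemma cpow_div_pos {a : ℝ} (ha : 0 < a) {x : ℝ} (hx : 0 ≤ x) (w : ℂ) :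
    (((x / a : ℝ)) : ℂ) ^ w = ((x : ℝ) : ℂ) ^ w * ((a : ℝ) : ℂ) ^ (-w) := by
  have h1 : ((x / a : ℝ) : ℂ) = ((x : ℝ) : ℂ) * (((a⁻¹ : ℝ)) : ℂ) := by
    push_cast; ring
  rw [h1, Complex.mul_cpow_ofReal_nonneg hx (by positivity), Complex.ofReal_inv,
    Complex.inv_cpow _ _ (by rw [Complex.arg_ofReal_of_nonneg ha.le]; exact Real.pi_ne_zero.symm),
    ← Complex.cpow_neg]

lemma Dterm_eq {a : ℝ} (ha : 0 < a) (s : ℂ) (n : ℕ) :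
    (4 * (n : ℂ) + 4) * (((((n : ℝ) + 1) / a) : ℝ) : ℂ) ^ (-s)
      = 4 * ((a : ℝ) : ℂ) ^ s * (1 / ((n : ℂ) + 1) ^ (s - 1)) := by
  rw [cpow_div_pos ha (by positivity) (-s), neg_neg]
  have hz : ((n : ℂ) + 1) ≠ 0 := by
    exact_mod_cast Nat.succ_ne_zero n
  have hcast : ((((n : ℝ) + 1) : ℝ) : ℂ) = (n : ℂ) + 1 := by push_cast; ring
  rw [hcast]
  have h1 : ((n : ℂ) + 1) ^ (-(s - 1)) = ((n : ℂ) + 1) * ((n : ℂ) + 1) ^ (-s) := by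
    rw [show -(s - 1) = 1 + -s by ring, Complex.cpow_add _ _ hz, Complex.cpow_one]
  rw [one_div, ← Complex.cpow_neg, h1]
  ring

/-- **Lemma C.4 of the paper**: for `a > 0` and `Re s > 3` all the series defining
`η_a(s)` and `θ_a(s)` converge absolutely, and
`η_a(s) = θ_a(s) + (2a)^{−s} + 4 aˢ ζ(s−1)`, where `ζ` is the Riemann zeta function. -/
theorem eta_eq_theta_add_zeta (a : ℝ) (ha : 0 < a) (s : ℂ) (hs : 3 < s.re) :
    Summable (fun n : ℕ =>
      ‖(2 * ((n : ℂ) + 2) - 2) * (((((n : ℝ) + 2) / a) : ℝ) : ℂ) ^ (-s)‖) ∧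
    Summable (fun n : ℕ =>
      ‖(2 * ((n : ℂ) + 3) - 2) * ((((((n : ℝ) + 3) + 2 * (a ^ 2 - 1)) / a) : ℝ) : ℂ) ^ (-s)‖) ∧
    Summable (fun n : ℕ => ∑ l ∈ Finset.Icc 1 ((n + 2) / 2),
      ‖(multBerger (n + 2) l : ℂ) *
        (((a + Real.sqrt (a ^ 2 + muBerger a (n + 2) l) : ℝ) : ℂ) ^ (-s)
          - ((Real.sqrt (a ^ 2 + muBerger a (n + 2) l) - a : ℝ) : ℂ) ^ (-s))‖) ∧
    Summable (fun n : ℕ => ∑ l ∈ Finset.Icc 0 ((n + 1) / 2),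
      ‖(multBerger (n + 1) l : ℂ) *
        (((Real.sqrt (a ^ 2 + muBerger a (n + 1) l) + a : ℝ) : ℂ) ^ (-s)
          - ((Real.sqrt (a ^ 2 + muBerger a (n + 1) l) - a : ℝ) : ℂ) ^ (-s))‖) ∧
    etaBergerCurl a s
      = thetaBerger a s + ((2 * a : ℝ) : ℂ) ^ (-s) + 4 * ((a : ℝ) : ℂ) ^ s * riemannZeta (s - 1) := by
  have hσ0 : (0 : ℝ) ≤ s.re := by linarith
  -- Claim 1
  have hcl1 : Summable (fun n : ℕ =>
      ‖(2 * ((n : ℂ) + 2) - 2) * (((((n : ℝ) + 2) / a) : ℝ) : ℂ) ^ (-s)‖) := by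
    refine coef_cpow_norm_summable ha hs (c := fun n : ℕ => 2 * ((n : ℂ) + 2) - 2)
      (x := fun n : ℕ => (n : ℝ) + 2) (c' := 2) ?_ (by norm_num)
      (fun n => by show (n:ℝ) + 1 ≤ (n:ℝ) + 2; linarith)
    intro n
    show ‖2 * ((n : ℂ) + 2) - 2‖ ≤ 2 * ((n : ℝ) + 1)
    rw [show 2 * ((n : ℂ) + 2) - 2 = (((2 * (n : ℝ) + 2 : ℝ)) : ℂ) by push_cast; ring,
      Complex.norm_real, Real.norm_eq_abs, abs_of_nonneg (by positivity)]
    linarith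
  -- Claim 2
  have hcl2 : Summable (fun n : ℕ =>
      ‖(2 * ((n : ℂ) + 3) - 2) * ((((((n : ℝ) + 3) + 2 * (a ^ 2 - 1)) / a) : ℝ) : ℂ) ^ (-s)‖) := by
    refine coef_cpow_norm_summable ha hs (c := fun n : ℕ => 2 * ((n : ℂ) + 3) - 2)
      (x := fun n : ℕ => ((n : ℝ) + 3) + 2 * (a ^ 2 - 1)) (c' := 4) ?_ (by norm_num)
      (fun n => by show (n:ℝ) + 1 ≤ (n:ℝ) + 3 + 2 * (a ^ 2 - 1); nlinarith [sq_nonneg a])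
    intro n
    show ‖2 * ((n : ℂ) + 3) - 2‖ ≤ 4 * ((n : ℝ) + 1)
    rw [show 2 * ((n : ℂ) + 3) - 2 = (((2 * (n : ℝ) + 4 : ℝ)) : ℂ) by push_cast; ring,
      Complex.norm_real, Real.norm_eq_abs, abs_of_nonneg (by positivity)]
    linarith
  -- Claim 3
  have hcl3 : Summable (fun n : ℕ => ∑ l ∈ Finset.Icc 1 ((n + 2) / 2),
      ‖(multBerger (n + 2) l : ℂ) *
        (((a + Real.sqrt (a ^ 2 + muBerger a (n + 2) l) : ℝ) : ℂ) ^ (-s)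
          - ((Real.sqrt (a ^ 2 + muBerger a (n + 2) l) - a : ℝ) : ℂ) ^ (-s))‖) := by
    refine (summable_Fterm_sum ha hs 2 1 (by norm_num)).congr fun n => ?_
    refine Finset.sum_congr rfl fun l _ => ?_
    rw [Fterm, add_comm (Real.sqrt (a ^ 2 + muBerger a (n + 2) l)) a]
  -- Claim 4
  have hcl4 : Summable (fun n : ℕ => ∑ l ∈ Finset.Icc 0 ((n + 1) / 2),
      ‖(multBerger (n + 1) l : ℂ) *
        (((Real.sqrt (a ^ 2 + muBerger a (n + 1) l) + a : ℝ) : ℂ) ^ (-s)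
          - ((Real.sqrt (a ^ 2 + muBerger a (n + 1) l) - a : ℝ) : ℂ) ^ (-s))‖) :=
    (summable_Fterm_sum ha hs 1 0 le_rfl).congr fun n => rfl
  refine ⟨hcl1, hcl2, hcl3, hcl4, ?_⟩
  -- Complex summability of the various series
  have hsg1 := hcl1.of_norm
  have hsg3 := hcl2.of_norm
  have hsr : Summable (fun n : ℕ => ∑ l ∈ Finset.Icc 1 ((n + 2) / 2), Fterm a s (n + 2) l) :=
    Summable.of_norm_bounded (summable_Fterm_sum ha hs 2 1 (by norm_num))
      (fun n => norm_sum_le _ _)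
  have hsq : Summable (fun n : ℕ => ∑ l ∈ Finset.Icc 1 ((n + 1) / 2), Fterm a s (n + 1) l) :=
    Summable.of_norm_bounded (summable_Fterm_sum ha hs 1 1 le_rfl)
      (fun n => norm_sum_le _ _)
  have hsA : Summable (fun n : ℕ =>
      (2 * (n : ℂ) + 4) * (((((n : ℝ) + 1 + 2 * a ^ 2) / a) : ℝ) : ℂ) ^ (-s)) := by
    apply Summable.of_norm
    refine coef_cpow_norm_summable ha hs (c := fun n : ℕ => 2 * (n : ℂ) + 4)
      (x := fun n : ℕ => (n : ℝ) + 1 + 2 * a ^ 2) (c' := 4) ?_ (by norm_num)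
      (fun n => by show (n:ℝ) + 1 ≤ (n:ℝ) + 1 + 2 * a ^ 2; nlinarith [sq_nonneg a])
    intro n
    show ‖2 * (n : ℂ) + 4‖ ≤ 4 * ((n : ℝ) + 1)
    rw [show 2 * (n : ℂ) + 4 = (((2 * (n : ℝ) + 4 : ℝ)) : ℂ) by push_cast; ring,
      Complex.norm_real, Real.norm_eq_abs, abs_of_nonneg (by positivity)]
    linarith
  have hsB : Summable (fun n : ℕ =>
      (2 * (n : ℂ) + 4) * (((((n : ℝ) + 1) / a) : ℝ) : ℂ) ^ (-s)) := by
    apply Summable.of_norm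
    refine coef_cpow_norm_summable ha hs (c := fun n : ℕ => 2 * (n : ℂ) + 4)
      (x := fun n : ℕ => (n : ℝ) + 1) (c' := 4) ?_ (by norm_num) (fun n => le_rfl)
    intro n
    show ‖2 * (n : ℂ) + 4‖ ≤ 4 * ((n : ℝ) + 1)
    rw [show 2 * (n : ℂ) + 4 = (((2 * (n : ℝ) + 4 : ℝ)) : ℂ) by push_cast; ring,
      Complex.norm_real, Real.norm_eq_abs, abs_of_nonneg (by positivity)]
    linarith
  have hsp : Summable (fun n : ℕ =>
      2 * (n : ℂ) * (((((n : ℝ) + 1) / a) : ℝ) : ℂ) ^ (-s)) := by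
    apply Summable.of_norm
    refine coef_cpow_norm_summable ha hs (c := fun n : ℕ => 2 * (n : ℂ))
      (x := fun n : ℕ => (n : ℝ) + 1) (c' := 2) ?_ (by norm_num) (fun n => le_rfl)
    intro n
    show ‖2 * (n : ℂ)‖ ≤ 2 * ((n : ℝ) + 1)
    rw [show 2 * (n : ℂ) = (((2 * (n : ℝ) : ℝ)) : ℂ) by push_cast; ring,
      Complex.norm_real, Real.norm_eq_abs, abs_of_nonneg (by positivity)]
    linarith
  have hsF0 : Summable (fun n : ℕ => Fterm a s (n + 1) 0) :=
    (hsA.sub hsB).congr (fun n => (Fterm_zero ha s n).symm)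
  -- θ decomposition
  have hθ : thetaBerger a s
      = ((∑' n : ℕ, (2 * (n : ℂ) + 4) * (((((n : ℝ) + 1 + 2 * a ^ 2) / a) : ℝ) : ℂ) ^ (-s))
          - ∑' n : ℕ, (2 * (n : ℂ) + 4) * (((((n : ℝ) + 1) / a) : ℝ) : ℂ) ^ (-s))
        + ∑' n : ℕ, ∑ l ∈ Finset.Icc 1 ((n + 2) / 2), Fterm a s (n + 2) l := by
    have hdef : thetaBerger a s
        = ∑' n : ℕ, ∑ l ∈ Finset.Icc 0 ((n + 1) / 2), Fterm a s (n + 1) l := rfl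
    have hsplit : ∀ n : ℕ,
        (∑ l ∈ Finset.Icc 0 ((n + 1) / 2), Fterm a s (n + 1) l)
          = Fterm a s (n + 1) 0 + ∑ l ∈ Finset.Icc 1 ((n + 1) / 2), Fterm a s (n + 1) l := by
      intro n
      rw [show Finset.Icc 0 ((n + 1) / 2) = insert 0 (Finset.Icc 1 ((n + 1) / 2)) by
        ext x; simp [Finset.mem_Icc]; omega]
      rw [Finset.sum_insert (by simp)]
    rw [hdef, tsum_congr hsplit, Summable.tsum_add hsF0 hsq]
    congr 1
    · rw [tsum_congr (fun n => Fterm_zero ha s n), Summable.tsum_sub hsA hsB]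
    · rw [Summable.tsum_eq_zero_add hsq]
      have h0 : (∑ l ∈ Finset.Icc 1 ((0 + 1) / 2), Fterm a s (0 + 1) l) = 0 := by
        norm_num
      rw [h0, zero_add]
  -- η decomposition
  have hη : etaBergerCurl a s
      = (∑' n : ℕ, (2 * ((n : ℂ) + 2) - 2) * (((((n : ℝ) + 2) / a) : ℝ) : ℂ) ^ (-s))
        + ((2 * a : ℝ) : ℂ) ^ (-s)
        + (∑' n : ℕ, (2 * (n : ℂ) + 4) * (((((n : ℝ) + 1 + 2 * a ^ 2) / a) : ℝ) : ℂ) ^ (-s))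
        + ∑' n : ℕ, ∑ l ∈ Finset.Icc 1 ((n + 2) / 2), Fterm a s (n + 2) l := by
    rw [etaBergerCurl]
    congr 1
    · congr 1
      apply tsum_congr
      intro n
      rw [show ((n : ℝ) + 3) + 2 * (a ^ 2 - 1) = (n : ℝ) + 1 + 2 * a ^ 2 by ring,
        show 2 * ((n : ℂ) + 3) - 2 = 2 * (n : ℂ) + 4 by ring]
    · apply tsum_congr
      intro n
      refine Finset.sum_congr rfl fun l _ => ?_
      rw [Fterm, add_comm (Real.sqrt (a ^ 2 + muBerger a (n + 2) l)) a]
  -- Shift in the first series of η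
  have hg1p : (∑' n : ℕ, (2 * ((n : ℂ) + 2) - 2) * (((((n : ℝ) + 2) / a) : ℝ) : ℂ) ^ (-s))
      = ∑' n : ℕ, 2 * (n : ℂ) * (((((n : ℝ) + 1) / a) : ℝ) : ℂ) ^ (-s) := by
    rw [Summable.tsum_eq_zero_add hsp]
    have h0 : 2 * ((0 : ℕ) : ℂ) * (((((0 : ℕ) : ℝ) + 1) / a : ℝ) : ℂ) ^ (-s) = 0 := by
      norm_num
    rw [h0, zero_add]
    apply tsum_congr
    intro n
    rw [show (((n + 1 : ℕ) : ℝ) + 1) = (n : ℝ) + 2 by push_cast; ring,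
      show 2 * (((n + 1 : ℕ)) : ℂ) = 2 * ((n : ℂ) + 2) - 2 by push_cast; ring]
  -- The zeta part
  have hζ : (∑' n : ℕ, 2 * (n : ℂ) * (((((n : ℝ) + 1) / a) : ℝ) : ℂ) ^ (-s))
      + (∑' n : ℕ, (2 * (n : ℂ) + 4) * (((((n : ℝ) + 1) / a) : ℝ) : ℂ) ^ (-s))
      = 4 * ((a : ℝ) : ℂ) ^ s * riemannZeta (s - 1) := by
    rw [← Summable.tsum_add hsp hsB]
    have hstep : ∀ n : ℕ,
        2 * (n : ℂ) * (((((n : ℝ) + 1) / a) : ℝ) : ℂ) ^ (-s)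
          + (2 * (n : ℂ) + 4) * (((((n : ℝ) + 1) / a) : ℝ) : ℂ) ^ (-s)
          = 4 * ((a : ℝ) : ℂ) ^ s * (1 / ((n : ℂ) + 1) ^ (s - 1)) := by
      intro n
      rw [← Dterm_eq ha s n]
      ring
    rw [tsum_congr hstep, tsum_mul_left,
      ← zeta_eq_tsum_one_div_nat_add_one_cpow (by rw [Complex.sub_re, Complex.one_re]; linarith)]
  rw [hη, hθ, hg1p, ← hζ]
  ring
end
end

section
/- For every ξ ∈ ℝ³ ∖ {0}, the characteristic polynomial of the complex 3×3 matrix curl_prin(ξ) equals X·(X − ‖ξ‖)·(X + ‖ξ‖); in particular det curl_prin(ξ) = 0 and the eigenvalues of curl_prin(ξ) are exactly 0, +‖ξ‖ and −‖ξ‖, each of algebraic multiplicity one. -/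
open Polynomial

noncomputable section

/-- The totally antisymmetric symbol on three indices, with `ε_{123} = 1`. -/
def epsSym (i j k : Fin 3) : ℝ :=
  if (i, j, k) = (0, 1, 2) ∨ (i, j, k) = (1, 2, 0) ∨ (i, j, k) = (2, 0, 1) then 1
  else if (i, j, k) = (2, 1, 0) ∨ (i, j, k) = (1, 0, 2) ∨ (i, j, k) = (0, 2, 1) then -1
  else 0

/-- `‖ξ‖ := (Σ_{μ,ν} G^{μν} ξ_μ ξ_ν)^{1/2}`, the Riemannian norm of a covector. -/
def xiNorm (G : Matrix (Fin 3) (Fin 3) ℝ) (ξ : Fin 3 → ℝ) : ℝ :=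
  Real.sqrt (∑ μ, ∑ ν, G μ ν * ξ μ * ξ ν)

/-- The principal symbol of `curl = *d` acting on 1-forms:
`[curl_prin(ξ)]_α{}^β := −i ρ Σ_{μ,ν,γ} ε_{αμν} G^{μβ} G^{νγ} ξ_γ`, `ρ := (det G)^{-1/2}`. -/
def curlPrin (G : Matrix (Fin 3) (Fin 3) ℝ) (ξ : Fin 3 → ℝ) : Matrix (Fin 3) (Fin 3) ℂ :=
  Matrix.of fun α β =>
    -Complex.I *
      (((Real.sqrt G.det)⁻¹ * ∑ μ, ∑ ν, ∑ γ, epsSym α μ ν * G μ β * G ν γ * ξ γ : ℝ) : ℂ)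

lemma eps000 : epsSym 0 0 0 = 0 := rfl
lemma eps001 : epsSym 0 0 1 = 0 := rfl
lemma eps002 : epsSym 0 0 2 = 0 := rfl
lemma eps010 : epsSym 0 1 0 = 0 := rfl
lemma eps011 : epsSym 0 1 1 = 0 := rfl
lemma eps012 : epsSym 0 1 2 = 1 := rfl
lemma eps020 : epsSym 0 2 0 = 0 := rfl
lemma eps021 : epsSym 0 2 1 = -1 := rfl
lemma eps022 : epsSym 0 2 2 = 0 := rfl
lemma eps100 : epsSym 1 0 0 = 0 := rfl
lemma eps101 : epsSym 1 0 1 = 0 := rfl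
lemma eps102 : epsSym 1 0 2 = -1 := rfl
lemma eps110 : epsSym 1 1 0 = 0 := rfl
lemma eps111 : epsSym 1 1 1 = 0 := rfl
lemma eps112 : epsSym 1 1 2 = 0 := rfl
lemma eps120 : epsSym 1 2 0 = 1 := rfl
lemma eps121 : epsSym 1 2 1 = 0 := rfl
lemma eps122 : epsSym 1 2 2 = 0 := rfl
lemma eps200 : epsSym 2 0 0 = 0 := rfl
lemma eps201 : epsSym 2 0 1 = 1 := rfl
lemma eps202 : epsSym 2 0 2 = 0 := rfl
lemma eps210 : epsSym 2 1 0 = -1 := rfl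
lemma eps211 : epsSym 2 1 1 = 0 := rfl
lemma eps212 : epsSym 2 1 2 = 0 := rfl
lemma eps220 : epsSym 2 2 0 = 0 := rfl
lemma eps221 : epsSym 2 2 1 = 0 := rfl
lemma eps222 : epsSym 2 2 2 = 0 := rfl

set_option maxHeartbeats 4000000 in
/-- **Formulae (2.2)–(2.4) of the paper**: for `ξ ≠ 0` the characteristic polynomial of
`curl_prin(ξ)` is `X (X − ‖ξ‖)(X + ‖ξ‖)`; in particular `det curl_prin(ξ) = 0` and the
eigenvalues of `curl_prin(ξ)` are exactly `0, ±‖ξ‖`, each simple. -/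
theorem charpoly_curlPrin (G : Matrix (Fin 3) (Fin 3) ℝ) (hsym : G.IsSymm)
    (hpos : G.PosDef) (ξ : Fin 3 → ℝ) (hξ : ξ ≠ 0) :
    (curlPrin G ξ).charpoly
      = X * (X - C ((xiNorm G ξ : ℝ) : ℂ)) * (X + C ((xiNorm G ξ : ℝ) : ℂ)) := by
  have h10 : G 1 0 = G 0 1 := hsym.apply 0 1
  have h20 : G 2 0 = G 0 2 := hsym.apply 0 2
  have h21 : G 2 1 = G 1 2 := hsym.apply 1 2
  have hq : 0 ≤ ∑ μ, ∑ ν, G μ ν * ξ μ * ξ ν := by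
    have hq' : ∑ μ, ∑ ν, G μ ν * ξ μ * ξ ν = dotProduct (star ξ) (Matrix.mulVec G ξ) := by
      simp only [dotProduct, Matrix.mulVec, Pi.star_apply, star_trivial,
        Fin.sum_univ_three]
      ring
    rw [hq']
    exact (hpos.dotProduct_mulVec_pos hξ).le
  have haa : ((xiNorm G ξ : ℝ) : ℂ) * ((xiNorm G ξ : ℝ) : ℂ)
      = ((∑ μ, ∑ ν, G μ ν * ξ μ * ξ ν : ℝ) : ℂ) := by
    rw [← Complex.ofReal_mul, xiNorm, Real.mul_self_sqrt hq]
  simp only [Fin.sum_univ_three] at haa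
  push_cast at haa
  rw [h10, h20, h21] at haa
  have hrr : (Real.sqrt G.det)⁻¹ * (Real.sqrt G.det)⁻¹ * G.det = 1 := by
    have hs0 : Real.sqrt G.det ≠ 0 := (Real.sqrt_pos.mpr hpos.det_pos).ne'
    rw [← Real.mul_self_sqrt hpos.det_pos.le]
    field_simp
    rw [Real.sqrt_sq (Real.sqrt_nonneg _)]
  have hrrC := congrArg (Complex.ofReal) hrr
  push_cast at hrrC
  have hdet := Matrix.det_fin_three G
  have hdetC := congrArg (Complex.ofReal) hdet
  push_cast at hdetC
  rw [h10, h20, h21] at hdetC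
  set sC : ℂ := ((Real.sqrt G.det : ℝ) : ℂ) with hsC
  set qC : ℂ := ((G 0 0 : ℝ) : ℂ) * (ξ 0 : ℂ) * (ξ 0 : ℂ)
      + ((G 0 1 : ℝ) : ℂ) * (ξ 0 : ℂ) * (ξ 1 : ℂ) * 2
      + ((G 0 2 : ℝ) : ℂ) * (ξ 0 : ℂ) * (ξ 2 : ℂ) * 2
      + ((G 1 1 : ℝ) : ℂ) * (ξ 1 : ℂ) * (ξ 1 : ℂ)
      + ((G 1 2 : ℝ) : ℂ) * (ξ 1 : ℂ) * (ξ 2 : ℂ) * 2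
      + ((G 2 2 : ℝ) : ℂ) * (ξ 2 : ℂ) * (ξ 2 : ℂ) with hqC
  have H1 : curlPrin G ξ 0 0 + curlPrin G ξ 1 1 + curlPrin G ξ 2 2 = 0 := by
    simp only [curlPrin, Matrix.of_apply, Fin.sum_univ_three, eps000, eps001, eps002, eps010,
      eps011, eps012, eps020, eps021, eps022, eps100, eps101, eps102, eps110, eps111, eps112,
      eps120, eps121, eps122, eps200, eps201, eps202, eps210, eps211, eps212, eps220, eps221,
      eps222]
    push_cast
    rw [h10, h20, h21]
    ring
  have H2 : curlPrin G ξ 0 0 * curlPrin G ξ 1 1 - curlPrin G ξ 0 1 * curlPrin G ξ 1 0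
      + curlPrin G ξ 0 0 * curlPrin G ξ 2 2 - curlPrin G ξ 0 2 * curlPrin G ξ 2 0
      + curlPrin G ξ 1 1 * curlPrin G ξ 2 2 - curlPrin G ξ 1 2 * curlPrin G ξ 2 1
      = -(((xiNorm G ξ : ℝ) : ℂ) * ((xiNorm G ξ : ℝ) : ℂ)) := by
    simp only [curlPrin, Matrix.of_apply, Fin.sum_univ_three, eps000, eps001, eps002, eps010,
      eps011, eps012, eps020, eps021, eps022, eps100, eps101, eps102, eps110, eps111, eps112,
      eps120, eps121, eps122, eps200, eps201, eps202, eps210, eps211, eps212, eps220, eps221,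
      eps222]
    push_cast
    rw [h10, h20, h21]
    ring_nf
    simp only [Complex.I_sq]
    linear_combination haa - qC * hrrC + (sC⁻¹ * sC⁻¹ * qC) * hdetC
  have H3 : curlPrin G ξ 0 0 * (curlPrin G ξ 1 1 * curlPrin G ξ 2 2
        - curlPrin G ξ 1 2 * curlPrin G ξ 2 1)
      - curlPrin G ξ 0 1 * (curlPrin G ξ 1 0 * curlPrin G ξ 2 2
        - curlPrin G ξ 1 2 * curlPrin G ξ 2 0)
      + curlPrin G ξ 0 2 * (curlPrin G ξ 1 0 * curlPrin G ξ 2 1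
        - curlPrin G ξ 1 1 * curlPrin G ξ 2 0) = 0 := by
    simp only [curlPrin, Matrix.of_apply, Fin.sum_univ_three, eps000, eps001, eps002, eps010,
      eps011, eps012, eps020, eps021, eps022, eps100, eps101, eps102, eps110, eps111, eps112,
      eps120, eps121, eps122, eps200, eps201, eps202, eps210, eps211, eps212, eps220, eps221,
      eps222]
    push_cast
    ring
  have hC1 := congrArg (C : ℂ →+* ℂ[X]) H1
  have hC2 := congrArg (C : ℂ →+* ℂ[X]) H2
  have hC3 := congrArg (C : ℂ →+* ℂ[X]) H3
  simp only [map_add, map_sub, map_mul, map_neg, map_zero] at hC1 hC2 hC3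
  rw [Matrix.charpoly, Matrix.det_fin_three]
  simp only [Matrix.charmatrix_apply_eq, Matrix.charmatrix_apply_ne _ _ _ (by decide : (0 : Fin 3) ≠ 1),
    Matrix.charmatrix_apply_ne _ _ _ (by decide : (0 : Fin 3) ≠ 2),
    Matrix.charmatrix_apply_ne _ _ _ (by decide : (1 : Fin 3) ≠ 0),
    Matrix.charmatrix_apply_ne _ _ _ (by decide : (1 : Fin 3) ≠ 2),
    Matrix.charmatrix_apply_ne _ _ _ (by decide : (2 : Fin 3) ≠ 0),
    Matrix.charmatrix_apply_ne _ _ _ (by decide : (2 : Fin 3) ≠ 1)]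
  linear_combination (-(X ^ 2) : ℂ[X]) * hC1 + (X : ℂ[X]) * hC2 - hC3
end
end

section
/- For every y ∈ ℝ³, the integral (2π)^{−3} ∫_{ℝ³} ⟨ξ⟩^{−5} e^{−i⟨y,ξ⟩} dξ is a real number and equals (1/(12π²)) ∫_ℝ cos(|y| t) (1+t²)^{−3/2} dt. (This is Lemma 7.2 of the paper in its Bessel-free intermediate form; by Basset's integral the common value is (1/(6π²)) |y| K₁(|y|), where K₁ is the modified Bessel function of the second kind.) -/
open MeasureTheory

private lemma bessel_sqrt_zpow_neg (x : ℝ) (hx : 0 < x) (n : ℕ) :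
    (Real.sqrt x) ^ (-(n:ℤ)) = x ^ (-(n/2 : ℝ)) := by
  rw [Real.sqrt_eq_rpow, ← Real.rpow_intCast (x ^ (1/2 : ℝ)), ← Real.rpow_mul hx.le]
  norm_num
  ring_nf

private lemma bessel_lemB (a : ℝ) (ha : 0 < a) :
    ∫ r in Set.Ioi (0:ℝ), r * (Real.sqrt (a + r ^ 2)) ^ (-5 : ℤ)
      = (1/3) * (Real.sqrt a) ^ (-3 : ℤ) := by
  have key : ∀ r : ℝ, HasDerivAt (fun r : ℝ => -(1/3) * (a + r ^ 2) ^ (-(3/2) : ℝ))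
      (r * (a + r ^ 2) ^ (-(5/2) : ℝ)) r := by
    intro r
    have hpos : 0 < a + r ^ 2 := by positivity
    have h1 : HasDerivAt (fun r : ℝ => a + r ^ 2) (2 * r) r := by
      simpa using ((hasDerivAt_pow 2 r).const_add a)
    have h2 := (Real.hasDerivAt_rpow_const (p := (-(3/2) : ℝ)) (Or.inl hpos.ne')).comp r h1
    have := h2.const_mul (-(1/3) : ℝ)
    refine this.congr_deriv ?_
    have : (a + r ^ 2) ^ (-(5/2) : ℝ) = (a + r^2) ^ (-(3/2) - 1 : ℝ) := by norm_num
    rw [this]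
    ring
  have tend : Filter.Tendsto (fun r : ℝ => -(1/3) * (a + r ^ 2) ^ (-(3/2) : ℝ))
      Filter.atTop (nhds 0) := by
    rw [show (0:ℝ) = -(1/3) * 0 by ring]
    apply Filter.Tendsto.const_mul
    have h3 : Filter.Tendsto (fun r : ℝ => a + r ^ 2) Filter.atTop Filter.atTop :=
      Filter.tendsto_atTop_add_const_left _ a
        (by simpa using (Filter.tendsto_pow_atTop (two_ne_zero) :
          Filter.Tendsto (fun r : ℝ => r ^ 2) Filter.atTop Filter.atTop))
    exact (tendsto_rpow_neg_atTop (by norm_num : (0:ℝ) < 3/2)).comp h3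
  have heq := integral_Ioi_of_hasDerivAt_of_nonneg' (a := 0)
    (g := fun r : ℝ => -(1/3) * (a + r ^ 2) ^ (-(3/2) : ℝ))
    (g' := fun r => r * (a + r ^ 2) ^ (-(5/2) : ℝ))
    (fun r _ => key r)
    (fun r hr => mul_nonneg (le_of_lt hr) (Real.rpow_nonneg (by positivity) _)) tend
  rw [show (fun r : ℝ => r * (Real.sqrt (a + r ^ 2)) ^ (-5 : ℤ))
      = fun r => r * (a + r ^ 2) ^ (-(5/2) : ℝ) from ?_]
  · rw [heq, show ((-3:ℤ)) = -((3:ℕ):ℤ) by norm_num, bessel_sqrt_zpow_neg a ha 3]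
    norm_num
  · funext r
    rw [show ((-5:ℤ)) = -((5:ℕ):ℤ) by norm_num, bessel_sqrt_zpow_neg _ (by positivity) 5]
    norm_num

private lemma bessel_lemA (a : ℝ) (ha : 0 < a) :
    ∫ ζ : EuclideanSpace ℝ (Fin 2), (Real.sqrt (a + ‖ζ‖ ^ 2)) ^ (-5 : ℤ)
      = (2 * Real.pi / 3) * (Real.sqrt a) ^ (-3 : ℤ) := by
  have h := MeasureTheory.integral_fun_norm_addHaar
    (volume : Measure (EuclideanSpace ℝ (Fin 2)))
    (fun r : ℝ => (Real.sqrt (a + r ^ 2)) ^ (-5 : ℤ))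
  simp only [show Module.finrank ℝ (EuclideanSpace ℝ (Fin 2)) = 2 by simp] at h
  rw [h]
  have hball : volume.real (Metric.ball (0 : EuclideanSpace ℝ (Fin 2)) 1) = Real.pi := by
    rw [Measure.real, EuclideanSpace.volume_ball]
    simp [Real.Gamma_two, Real.sq_sqrt Real.pi_pos.le]
    rw [show (1:ℝ)+1 = 2 by norm_num, Real.Gamma_two]
    simp [ENNReal.toReal_ofReal Real.pi_pos.le]
  rw [hball]
  simp only [show (2:ℕ)-1 = 1 from rfl, pow_one, smul_eq_mul, nsmul_eq_mul]
  rw [bessel_lemB a ha]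
  ring

private lemma bessel_c_int : Integrable (fun t : ℝ => (Real.sqrt (1 + t ^ 2)) ^ (-3 : ℤ)) := by
  refine integrable_inv_one_add_sq.mono' ?_ (Filter.Eventually.of_forall fun t => ?_)
  · apply Continuous.aestronglyMeasurable
    apply Continuous.zpow₀
    · exact (continuous_const.add (continuous_pow 2)).sqrt
    · intro t; left; positivity
  · have h1 : (0:ℝ) < 1 + t ^ 2 := by positivity
    have hs1 : 1 ≤ Real.sqrt (1 + t ^ 2) := by
      calc (1:ℝ) = Real.sqrt 1 := Real.sqrt_one.symm
        _ ≤ _ := Real.sqrt_le_sqrt (by nlinarith [sq_nonneg t])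
    set s := Real.sqrt (1 + t ^ 2)
    have hsp : (0:ℝ) < s := lt_of_lt_of_le one_pos hs1
    have hnorm : ‖s ^ (-3 : ℤ)‖ = (s ^ (3:ℕ))⁻¹ := by
      rw [Real.norm_eq_abs, abs_of_nonneg (zpow_nonneg hsp.le _), zpow_neg,
        show ((3:ℤ)) = ((3:ℕ):ℤ) by norm_num, zpow_natCast]
    rw [hnorm]
    have hss : s ^ 2 = 1 + t ^ 2 := Real.sq_sqrt h1.le
    have : 1 + t ^ 2 ≤ s ^ (3:ℕ) := by
      calc 1 + t ^ 2 = s ^ 2 := hss.symm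
        _ ≤ s ^ (3:ℕ) := pow_le_pow_right₀ hs1 (by norm_num)
    exact inv_anti₀ h1 this

private lemma bessel_cos_mul_c_int (r : ℝ) :
    Integrable (fun t : ℝ => Real.cos (r * t) * (Real.sqrt (1 + t ^ 2)) ^ (-3 : ℤ)) := by
  refine bessel_c_int.mono' ?_ (Filter.Eventually.of_forall fun t => ?_)
  · apply Continuous.aestronglyMeasurable
    apply Continuous.mul
    · exact Real.continuous_cos.comp (continuous_const.mul continuous_id)
    · apply Continuous.zpow₀
      · exact (continuous_const.add (continuous_pow 2)).sqrt
      · intro t; left; positivity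
  · rw [norm_mul]
    have hsp : (0:ℝ) < Real.sqrt (1 + t ^ 2) := Real.sqrt_pos.mpr (by positivity)
    calc ‖Real.cos (r * t)‖ * ‖(Real.sqrt (1 + t ^ 2)) ^ (-3 : ℤ)‖
        ≤ 1 * ‖(Real.sqrt (1 + t ^ 2)) ^ (-3 : ℤ)‖ := by
          apply mul_le_mul_of_nonneg_right (Real.abs_cos_le_one _) (norm_nonneg _)
      _ = (Real.sqrt (1 + t ^ 2)) ^ (-3 : ℤ) := by
          rw [one_mul, Real.norm_eq_abs, abs_of_nonneg (zpow_nonneg hsp.le _)]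

private lemma bessel_sin_mul_c_int (r : ℝ) :
    Integrable (fun t : ℝ => Real.sin (r * t) * (Real.sqrt (1 + t ^ 2)) ^ (-3 : ℤ)) := by
  refine bessel_c_int.mono' ?_ (Filter.Eventually.of_forall fun t => ?_)
  · apply Continuous.aestronglyMeasurable
    apply Continuous.mul
    · exact Real.continuous_sin.comp (continuous_const.mul continuous_id)
    · apply Continuous.zpow₀
      · exact (continuous_const.add (continuous_pow 2)).sqrt
      · intro t; left; positivity
  · rw [norm_mul]
    have hsp : (0:ℝ) < Real.sqrt (1 + t ^ 2) := Real.sqrt_pos.mpr (by positivity)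
    calc ‖Real.sin (r * t)‖ * ‖(Real.sqrt (1 + t ^ 2)) ^ (-3 : ℤ)‖
        ≤ 1 * ‖(Real.sqrt (1 + t ^ 2)) ^ (-3 : ℤ)‖ := by
          apply mul_le_mul_of_nonneg_right (Real.abs_sin_le_one _) (norm_nonneg _)
      _ = (Real.sqrt (1 + t ^ 2)) ^ (-3 : ℤ) := by
          rw [one_mul, Real.norm_eq_abs, abs_of_nonneg (zpow_nonneg hsp.le _)]

private lemma bessel_sin_odd_zero (r : ℝ) :
    ∫ t : ℝ, Real.sin (r * t) * (Real.sqrt (1 + t ^ 2)) ^ (-3 : ℤ) = 0 := by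
  have h := MeasureTheory.integral_neg_eq_self
    (fun t : ℝ => Real.sin (r * t) * (Real.sqrt (1 + t ^ 2)) ^ (-3 : ℤ)) volume
  have h2 : (fun t : ℝ => Real.sin (r * -t) * (Real.sqrt (1 + (-t) ^ 2)) ^ (-3 : ℤ))
      = fun t : ℝ => -(Real.sin (r * t) * (Real.sqrt (1 + t ^ 2)) ^ (-3 : ℤ)) := by
    funext t
    rw [mul_neg, Real.sin_neg, neg_sq]
    ring
  rw [h2] at h
  rw [integral_neg] at h
  linarith [h]

private lemma bessel_one_d_step (r : ℝ) :
    ∫ t : ℝ, (((Real.sqrt (1 + t ^ 2)) ^ (-3 : ℤ) : ℝ) : ℂ) *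
        Complex.exp (-Complex.I * ((r * t : ℝ) : ℂ))
      = ((∫ t : ℝ, Real.cos (r * t) * (Real.sqrt (1 + t ^ 2)) ^ (-3 : ℤ) : ℝ) : ℂ) := by
  have key : ∀ t : ℝ, (((Real.sqrt (1 + t ^ 2)) ^ (-3 : ℤ) : ℝ) : ℂ) *
        Complex.exp (-Complex.I * ((r * t : ℝ) : ℂ))
      = ((Real.cos (r * t) * (Real.sqrt (1 + t ^ 2)) ^ (-3 : ℤ) : ℝ) : ℂ)
        - ((Real.sin (r * t) * (Real.sqrt (1 + t ^ 2)) ^ (-3 : ℤ) : ℝ) : ℂ) * Complex.I := by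
    intro t
    have : (-Complex.I * ((r * t : ℝ) : ℂ)) = ((-(r*t) : ℝ) : ℂ) * Complex.I := by
      push_cast; ring
    rw [this, Complex.exp_mul_I, ← Complex.ofReal_cos, ← Complex.ofReal_sin,
      Real.cos_neg, Real.sin_neg]
    push_cast
    ring
  simp_rw [key]
  rw [integral_sub]
  · rw [integral_mul_const]
    have hc : ∫ a : ℝ, ((Real.cos (r * a) * (Real.sqrt (1 + a ^ 2)) ^ (-3 : ℤ) : ℝ) : ℂ)
        = ((∫ a : ℝ, Real.cos (r * a) * (Real.sqrt (1 + a ^ 2)) ^ (-3 : ℤ) : ℝ) : ℂ) :=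
      integral_ofReal
    have hsin : ∫ a : ℝ, ((Real.sin (r * a) * (Real.sqrt (1 + a ^ 2)) ^ (-3 : ℤ) : ℝ) : ℂ)
        = ((∫ a : ℝ, Real.sin (r * a) * (Real.sqrt (1 + a ^ 2)) ^ (-3 : ℤ) : ℝ) : ℂ) :=
      integral_ofReal
    rw [hc, hsin, bessel_sin_odd_zero]
    simp
  · exact (bessel_cos_mul_c_int r).ofReal
  · exact ((bessel_sin_mul_c_int r).ofReal.mul_const Complex.I)

private lemma bessel_Phi_integrable (y : EuclideanSpace ℝ (Fin 3)) :
    Integrable (fun ξ : EuclideanSpace ℝ (Fin 3) =>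
      (((Real.sqrt (1 + ‖ξ‖ ^ 2)) ^ (-5 : ℤ) : ℝ) : ℂ) *
        Complex.exp (-Complex.I * ((inner ℝ y ξ : ℝ) : ℂ))) := by
  have hcont : Continuous (fun ξ : EuclideanSpace ℝ (Fin 3) =>
      (((Real.sqrt (1 + ‖ξ‖ ^ 2)) ^ (-5 : ℤ) : ℝ) : ℂ) *
        Complex.exp (-Complex.I * ((inner ℝ y ξ : ℝ) : ℂ))) := by
    apply Continuous.mul
    · apply Complex.continuous_ofReal.comp
      apply Continuous.zpow₀
      · exact (continuous_const.add (continuous_norm.pow 2)).sqrt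
      · intro x
        left
        positivity
    · exact Complex.continuous_exp.comp
        (continuous_const.mul (Complex.continuous_ofReal.comp
          (Continuous.inner continuous_const continuous_id)))
  have hint : Integrable (fun ξ : EuclideanSpace ℝ (Fin 3) => 4 * (1 + ‖ξ‖) ^ (-4 : ℝ)) :=
    (integrable_one_add_norm
      (by norm_num : ((Module.finrank ℝ (EuclideanSpace ℝ (Fin 3))):ℝ) < 4)).const_mul 4
  refine hint.mono' hcont.aestronglyMeasurable (Filter.Eventually.of_forall fun ξ => ?_)
  have h1 : (0:ℝ) < 1 + ‖ξ‖ ^ 2 := by positivity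
  set s := Real.sqrt (1 + ‖ξ‖ ^ 2) with hs
  have hs1 : 1 ≤ s := by
    rw [hs]
    calc (1:ℝ) = Real.sqrt 1 := Real.sqrt_one.symm
      _ ≤ _ := Real.sqrt_le_sqrt (by nlinarith [sq_nonneg ‖ξ‖])
  have hsp : 0 < s := lt_of_lt_of_le one_pos hs1
  have hkey : (1 + ‖ξ‖) ^ 4 ≤ 4 * s ^ 5 := by
    have h2 : (1 + ‖ξ‖) ^ 2 ≤ 2 * s ^ 2 := by
      rw [hs, Real.sq_sqrt h1.le]
      nlinarith [norm_nonneg ξ, sq_nonneg (1 - ‖ξ‖)]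
    calc (1 + ‖ξ‖) ^ 4 = ((1 + ‖ξ‖) ^ 2) ^ 2 := by ring
      _ ≤ (2 * s ^ 2) ^ 2 := by
          apply pow_le_pow_left₀ (by positivity) h2
      _ = 4 * s ^ 4 := by ring
      _ ≤ 4 * s ^ 5 := by
          have := pow_le_pow_right₀ hs1 (by norm_num : 4 ≤ 5)
          linarith
  have hnorm : ‖(((s ^ (-5 : ℤ) : ℝ) : ℂ) * Complex.exp (-Complex.I * ((inner ℝ y ξ : ℝ) : ℂ)))‖
      = s ^ (-5 : ℤ) := by
    rw [norm_mul, Complex.norm_exp]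
    simp [abs_of_nonneg (zpow_nonneg hsp.le _), abs_of_nonneg hsp.le]
  rw [hnorm]
  have h4 : (1 + ‖ξ‖) ^ (-4 : ℝ) = ((1 + ‖ξ‖) ^ (4:ℕ))⁻¹ := by
    rw [Real.rpow_neg (by positivity), show ((4:ℝ)) = ((4:ℕ):ℝ) by norm_num, Real.rpow_natCast]
  rw [h4, zpow_neg, show ((5:ℤ)) = ((5:ℕ):ℤ) by norm_num, zpow_natCast]
  rw [inv_eq_one_div, inv_eq_one_div, mul_one_div, div_le_div_iff₀ (by positivity) (by positivity)]
  linarith [hkey]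

private lemma bessel_exists_basis (y : EuclideanSpace ℝ (Fin 3)) :
    ∃ b : OrthonormalBasis (Fin 3) ℝ (EuclideanSpace ℝ (Fin 3)),
      ∀ x : EuclideanSpace ℝ (Fin 3), (inner ℝ y (b.repr.symm x) : ℝ) = ‖y‖ * x 0 := by
  by_cases hy : y = 0
  · exact ⟨EuclideanSpace.basisFun (Fin 3) ℝ, fun x => by simp [hy]⟩
  · have hn : ‖y‖ ≠ 0 := norm_ne_zero_iff.mpr hy
    have horth : Orthonormal ℝ (({0} : Set (Fin 3)).restrict
        (fun _ : Fin 3 => (‖y‖⁻¹ • y : EuclideanSpace ℝ (Fin 3)))) := by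
      constructor
      · intro i
        show ‖‖y‖⁻¹ • y‖ = 1
        rw [norm_smul, norm_inv, norm_norm, inv_mul_cancel₀ hn]
      · intro i j hij
        exact absurd (Subsingleton.elim i j) hij
    obtain ⟨b, hb⟩ := horth.exists_orthonormalBasis_extension_of_card_eq (by simp)
    refine ⟨b, fun x => ?_⟩
    have h0 : b 0 = ‖y‖⁻¹ • y := hb 0 rfl
    have h1 : y = ‖y‖ • b 0 := by rw [h0, smul_smul, mul_inv_cancel₀ hn, one_smul]
    calc (inner ℝ y (b.repr.symm x) : ℝ)
        = inner ℝ (b.repr y) (b.repr (b.repr.symm x)) := (b.repr.inner_map_map y _).symm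
      _ = inner ℝ (b.repr y) x := by rw [b.repr.apply_symm_apply]
      _ = ‖y‖ * x 0 := by
          have h2 : b.repr y = (‖y‖:ℝ) • EuclideanSpace.single (0 : Fin 3) (1:ℝ) := by
            conv_lhs => rw [h1]
            rw [b.repr.map_smul, b.repr_self]
          rw [h2, real_inner_smul_left, EuclideanSpace.inner_single_left]
          simp

/-- **Lemma 7.2 of the paper** (Bessel-free intermediate form): for every `y ∈ ℝ³`,
`(2π)⁻³ ∫_{ℝ³} ⟨ξ⟩⁻⁵ e^{−i⟨y,ξ⟩} dξ` is a real number and equals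
`(1/(12π²)) ∫_ℝ cos(|y| t)(1 + t²)^{−3/2} dt`. -/
theorem bessel_integral_lemma (y : EuclideanSpace ℝ (Fin 3)) :
    (((2 * Real.pi) ^ (-3 : ℤ) : ℝ) : ℂ) *
        ∫ ξ : EuclideanSpace ℝ (Fin 3),
          (((Real.sqrt (1 + ‖ξ‖ ^ 2)) ^ (-5 : ℤ) : ℝ) : ℂ) *
            Complex.exp (-Complex.I * ((inner ℝ y ξ : ℝ) : ℂ))
      = (((1 / (12 * Real.pi ^ 2)) *
            ∫ t : ℝ, Real.cos (‖y‖ * t) * (Real.sqrt (1 + t ^ 2)) ^ (-3 : ℤ) : ℝ) : ℂ) := by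
  obtain ⟨b, hb⟩ := bessel_exists_basis y
  set Φ : EuclideanSpace ℝ (Fin 3) → ℂ := fun ξ =>
    (((Real.sqrt (1 + ‖ξ‖ ^ 2)) ^ (-5 : ℤ) : ℝ) : ℂ) *
      Complex.exp (-Complex.I * ((inner ℝ y ξ : ℝ) : ℂ)) with hΦ
  set N : ℝ × (Fin 2 → ℝ) → ℂ := fun p =>
    (((Real.sqrt (1 + (p.1 ^ 2 + ∑ j : Fin 2, p.2 j ^ 2))) ^ (-5 : ℤ) : ℝ) : ℂ) *
      Complex.exp (-Complex.I * ((‖y‖ * p.1 : ℝ) : ℂ)) with hN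
  -- pointwise identification of N with the composition
  have hcomp : ∀ p : ℝ × (Fin 2 → ℝ),
      Φ (b.repr.symm ((MeasurableEquiv.toLp 2 (Fin 3 → ℝ)).symm.symm
        ((MeasurableEquiv.piFinSuccAbove (fun _ : Fin 3 => ℝ) 0).symm p))) = N p := by
    intro p
    simp only [hΦ, hN]
    have hnorm : ∀ x : EuclideanSpace ℝ (Fin 3), ‖b.repr.symm x‖ = ‖x‖ :=
      fun x => b.repr.symm.norm_map x
    set v : Fin 3 → ℝ := (MeasurableEquiv.piFinSuccAbove (fun _ : Fin 3 => ℝ) 0).symm p with hv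
    set x : EuclideanSpace ℝ (Fin 3) := (MeasurableEquiv.toLp 2 (Fin 3 → ℝ)).symm.symm v with hx
    have hxv : ∀ i, x i = v i := fun i => rfl
    have hv0 : v 0 = p.1 := by
      simp [hv, MeasurableEquiv.piFinSuccAbove]
    have hvsum : ∑ i : Fin 3, v i ^ 2 = p.1 ^ 2 + ∑ j : Fin 2, p.2 j ^ 2 := by
      simp [hv, MeasurableEquiv.piFinSuccAbove, Fin.sum_univ_succ]
    have hxn : ‖x‖ ^ 2 = p.1 ^ 2 + ∑ j : Fin 2, p.2 j ^ 2 := by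
      rw [EuclideanSpace.norm_eq, Real.sq_sqrt (by positivity)]
      simp_rw [Real.norm_eq_abs, sq_abs]
      simp_rw [hxv]; exact hvsum
    rw [hb, hnorm, hxn, show x 0 = p.1 from (hxv 0).trans hv0]
  -- the integral of Φ equals the integral of N
  have hIeq : ∫ ξ, Φ ξ = ∫ p : ℝ × (Fin 2 → ℝ), N p := by
    have e1 := (b.measurePreserving_repr_symm).integral_comp
      (b.repr.symm.toHomeomorph.measurableEmbedding) Φ
    rw [← e1]
    have e2 := (MeasurePreserving.symm _
        (EuclideanSpace.volume_preserving_symm_measurableEquiv_toLp (Fin 3))).integral_comp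
      (MeasurableEquiv.measurableEmbedding _) (fun x => Φ (b.repr.symm x))
    rw [← e2]
    have e3 := (MeasurePreserving.symm _
        (MeasureTheory.volume_preserving_piFinSuccAbove (fun _ : Fin 3 => ℝ) 0)).integral_comp
      (MeasurableEquiv.measurableEmbedding _)
      (fun v : Fin 3 → ℝ => Φ (b.repr.symm ((MeasurableEquiv.toLp 2 (Fin 3 → ℝ)).symm.symm v)))
    rw [← e3]
    exact integral_congr_ae (Filter.Eventually.of_forall hcomp)
  -- N is integrable
  have hNint : Integrable N := by
    have h1 : Integrable Φ := bessel_Phi_integrable y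
    have h2 : Integrable (fun x : EuclideanSpace ℝ (Fin 3) => Φ (b.repr.symm x)) :=
      ((b.measurePreserving_repr_symm).integrable_comp_emb
        (b.repr.symm.toHomeomorph.measurableEmbedding)).mpr h1
    have h3 : Integrable (fun v : Fin 3 → ℝ =>
        Φ (b.repr.symm ((MeasurableEquiv.toLp 2 (Fin 3 → ℝ)).symm.symm v))) :=
      ((MeasurePreserving.symm _
          (EuclideanSpace.volume_preserving_symm_measurableEquiv_toLp (Fin 3))).integrable_comp_emb
        (MeasurableEquiv.measurableEmbedding _)).mpr h2
    have h4 : Integrable (fun p : ℝ × (Fin 2 → ℝ) =>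
        Φ (b.repr.symm ((MeasurableEquiv.toLp 2 (Fin 3 → ℝ)).symm.symm
          ((MeasurableEquiv.piFinSuccAbove (fun _ : Fin 3 => ℝ) 0).symm p)))) :=
      ((MeasurePreserving.symm _
          (MeasureTheory.volume_preserving_piFinSuccAbove (fun _ : Fin 3 => ℝ) 0)).integrable_comp_emb
        (MeasurableEquiv.measurableEmbedding _)).mpr h3
    exact h4.congr (Filter.Eventually.of_forall hcomp)
  -- Fubini
  have hFub : ∫ p : ℝ × (Fin 2 → ℝ), N p = ∫ t : ℝ, ∫ w : Fin 2 → ℝ, N (t, w) := by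
    rw [show (volume : Measure (ℝ × (Fin 2 → ℝ))) = (volume : Measure ℝ).prod volume from
      MeasureTheory.Measure.volume_eq_prod ℝ (Fin 2 → ℝ)] at hNint ⊢
    exact MeasureTheory.integral_prod _ hNint
  -- inner integral
  have hInner : ∀ t : ℝ, (∫ w : Fin 2 → ℝ, N (t, w))
      = (((2 * Real.pi / 3) * (Real.sqrt (1 + t ^ 2)) ^ (-3 : ℤ) : ℝ) : ℂ) *
          Complex.exp (-Complex.I * ((‖y‖ * t : ℝ) : ℂ)) := by
    intro t
    have hpt : (0:ℝ) < 1 + t ^ 2 := by positivity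
    have step1 : (∫ w : Fin 2 → ℝ, N (t, w))
        = (∫ w : Fin 2 → ℝ,
            (((Real.sqrt ((1 + t ^ 2) + ∑ j : Fin 2, w j ^ 2)) ^ (-5 : ℤ) : ℝ) : ℂ))
          * Complex.exp (-Complex.I * ((‖y‖ * t : ℝ) : ℂ)) := by
      rw [← integral_mul_const]
      congr 1
      funext w
      simp only [hN]
      ring_nf
    rw [step1]
    have step3 : (∫ w : Fin 2 → ℝ,
        ((Real.sqrt ((1 + t ^ 2) + ∑ j : Fin 2, w j ^ 2)) ^ (-5 : ℤ) : ℝ))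
        = (2 * Real.pi / 3) * (Real.sqrt (1 + t ^ 2)) ^ (-3 : ℤ) := by
      rw [← (EuclideanSpace.volume_preserving_symm_measurableEquiv_toLp (Fin 2)).integral_comp
        (MeasurableEquiv.measurableEmbedding _)
        (fun w : Fin 2 → ℝ => ((Real.sqrt ((1 + t ^ 2) + ∑ j : Fin 2, w j ^ 2)) ^ (-5 : ℤ) : ℝ))]
      have e4 : (fun ζ : EuclideanSpace ℝ (Fin 2) =>
          (Real.sqrt ((1 + t ^ 2) + ∑ j : Fin 2, ((MeasurableEquiv.toLp 2 (Fin 2 → ℝ)).symm ζ) j ^ 2))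
            ^ (-5 : ℤ))
          = fun ζ : EuclideanSpace ℝ (Fin 2) =>
            (Real.sqrt ((1 + t ^ 2) + ‖ζ‖ ^ 2)) ^ (-5 : ℤ) := by
        funext ζ
        have : ∑ j : Fin 2, ((MeasurableEquiv.toLp 2 (Fin 2 → ℝ)).symm ζ) j ^ 2 = ‖ζ‖ ^ 2 := by
          rw [EuclideanSpace.norm_eq, Real.sq_sqrt (by positivity)]
          simp_rw [Real.norm_eq_abs, sq_abs]
          rfl
        rw [this]
      rw [e4, bessel_lemA _ hpt]
    have step2 : (∫ w : Fin 2 → ℝ,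
        (((Real.sqrt ((1 + t ^ 2) + ∑ j : Fin 2, w j ^ 2)) ^ (-5 : ℤ) : ℝ) : ℂ))
        = (((2 * Real.pi / 3) * (Real.sqrt (1 + t ^ 2)) ^ (-3 : ℤ) : ℝ) : ℂ) := by
      rw [← step3]
      exact integral_ofReal
    rw [step2]
  simp_rw [hIeq, hFub, hInner]
  -- pull out the constant and use the 1D lemma
  have hpull : ∫ t : ℝ, (((2 * Real.pi / 3) * (Real.sqrt (1 + t ^ 2)) ^ (-3 : ℤ) : ℝ) : ℂ) *
      Complex.exp (-Complex.I * ((‖y‖ * t : ℝ) : ℂ))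
      = ((2 * Real.pi / 3 : ℝ) : ℂ) *
        ∫ t : ℝ, (((Real.sqrt (1 + t ^ 2)) ^ (-3 : ℤ) : ℝ) : ℂ) *
          Complex.exp (-Complex.I * ((‖y‖ * t : ℝ) : ℂ)) := by
    rw [← integral_const_mul]
    congr 1
    funext t
    push_cast
    ring
  rw [hpull, bessel_one_d_step ‖y‖]
  rw [← Complex.ofReal_mul, ← Complex.ofReal_mul]
  congr 1
  rw [← mul_assoc]
  congr 1
  rw [zpow_neg, show ((3:ℤ)) = ((3:ℕ):ℤ) by norm_num, zpow_natCast]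
  field_simp
  ring
end
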